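/- If the curve C is Lipschitz continuous with constant L on [ξ₁, ξ₂] (with ξ₁ < ξ₂), then the TRT mapping Φ is Lipschitz continuous on the reference triangle minus the origin, with a Lipschitz constant depending only on L, |ξ₂ − ξ₁|, ‖x₃‖, and sup‖C‖. -/

import Mathlib

/-- If the curve `C` is Lipschitz on `[ξ₁, ξ₂]`, then the TRT mapping is
Lipschitz on the reference triangle minus the origin. -/
theorem trt_lipschitz
    (ξ₁ ξ₂ : ℝ) (hξ : ξ₁ < ξ₂)
    (C : ℝ → EuclideanSpace ℝ (Fin 2)) (L : NNReal)
    (hC : LipschitzOnWith L C (Set.Icc ξ₁ ξ₂))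
    (x₃ : EuclideanSpace ℝ (Fin 2))
    (Φ : ℝ × ℝ → EuclideanSpace ℝ (Fin 2))
    (hΦ : ∀ s r : ℝ, s + r ≠ 0 →
      Φ (s, r) = (1 - s - r) • x₃ + (s + r) • C ((s * ξ₁ + r * ξ₂) / (s + r))) :
    ∃ K : NNReal, LipschitzOnWith K Φ
      {p : ℝ × ℝ | 0 ≤ p.1 ∧ 0 ≤ p.2 ∧ p.1 + p.2 ≤ 1 ∧ 0 < p.1 + p.2} := by
  have hCd : ∀ x ∈ Set.Icc ξ₁ ξ₂, ∀ y ∈ Set.Icc ξ₁ ξ₂,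
      dist (C x) (C y) ≤ (L : ℝ) * dist x y :=
    (lipschitzOnWith_iff_dist_le_mul).1 hC
  set M : ℝ := ‖C ξ₁‖ + (L : ℝ) * (ξ₂ - ξ₁) with hMdef
  have hL0 : (0:ℝ) ≤ L := L.coe_nonneg
  have hM0 : 0 ≤ M := by nlinarith [norm_nonneg (C ξ₁), hξ, hL0]
  refine ⟨(2*(‖x₃‖ + M) + 3*(L:ℝ)*(|ξ₁|+|ξ₂|)).toNNReal,
    LipschitzOnWith.of_dist_le_mul ?_⟩
  rintro ⟨s, r⟩ ⟨hs, hr, hsum, hpos⟩ ⟨s', r'⟩ ⟨hs', hr', hsum', hpos'⟩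
  simp only at hs hr hsum hpos hs' hr' hsum' hpos'
  set u : ℝ := (s * ξ₁ + r * ξ₂) / (s + r) with hu
  set u' : ℝ := (s' * ξ₁ + r' * ξ₂) / (s' + r') with hu'
  have humem : u ∈ Set.Icc ξ₁ ξ₂ := by
    constructor
    · rw [hu, le_div_iff₀ hpos]; nlinarith
    · rw [hu, div_le_iff₀ hpos]; nlinarith
  have hu'mem : u' ∈ Set.Icc ξ₁ ξ₂ := by
    constructor
    · rw [hu', le_div_iff₀ hpos']; nlinarith
    · rw [hu', div_le_iff₀ hpos']; nlinarith
  have hCu' : ‖C u'‖ ≤ M := by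
    have h1 := hCd u' hu'mem ξ₁ ⟨le_refl ξ₁, hξ.le⟩
    have h2 : ‖C u' - C ξ₁‖ = dist (C u') (C ξ₁) := (dist_eq_norm _ _).symm
    have h3 : ‖C u'‖ ≤ ‖C u' - C ξ₁‖ + ‖C ξ₁‖ := by
      have := norm_add_le (C u' - C ξ₁) (C ξ₁); simpa using this
    have h4 : dist u' ξ₁ ≤ ξ₂ - ξ₁ := by
      rw [Real.dist_eq, abs_of_nonneg (by linarith [hu'mem.1])]
      linarith [hu'mem.2]
    nlinarith
  have hdecomp : Φ (s, r) - Φ (s', r') =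
      ((s' + r') - (s + r)) • (x₃ - C u') + (s + r) • (C u - C u') := by
    rw [hΦ s r hpos.ne', hΦ s' r' hpos'.ne', ← hu, ← hu']
    module
  have hnorm : dist (Φ (s, r)) (Φ (s', r')) ≤
      |(s + r) - (s' + r')| * (‖x₃‖ + M) + (s + r) * ((L:ℝ) * |u - u'|) := by
    rw [dist_eq_norm, hdecomp]
    calc ‖((s' + r') - (s + r)) • (x₃ - C u') + (s + r) • (C u - C u')‖
        ≤ ‖((s' + r') - (s + r)) • (x₃ - C u')‖ + ‖(s + r) • (C u - C u')‖ :=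
          norm_add_le _ _
      _ ≤ |(s + r) - (s' + r')| * (‖x₃‖ + M) + (s + r) * ((L:ℝ) * |u - u'|) := by
          rw [norm_smul, norm_smul, Real.norm_eq_abs, Real.norm_eq_abs,
            abs_of_pos hpos, abs_sub_comm]
          have e1 : ‖x₃ - C u'‖ ≤ ‖x₃‖ + M := by
            have := norm_sub_le x₃ (C u'); linarith
          have e2 : ‖C u - C u'‖ ≤ (L:ℝ) * |u - u'| := by
            have := hCd u humem u' hu'mem
            rw [dist_eq_norm, Real.dist_eq] at this; exact this
          have hab : 0 ≤ |(s + r) - (s' + r')| := abs_nonneg _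
          nlinarith [abs_nonneg ((s+r) - (s'+r')), norm_nonneg (x₃ - C u')]
  have hkey : (s + r) * |u - u'| ≤
      |s - s'| * |ξ₁| + |r - r'| * |ξ₂| + |(s + r) - (s' + r')| * (|ξ₁| + |ξ₂|) := by
    have heq : (s + r) * (u - u') =
        (s - s') * ξ₁ + (r - r') * ξ₂ - ((s + r) - (s' + r')) * u' := by
      rw [hu, hu']
      field_simp
      ring
    have habs : (s + r) * |u - u'| = |(s + r) * (u - u')| := by
      rw [abs_mul, abs_of_pos hpos]
    have hu'abs : |u'| ≤ |ξ₁| + |ξ₂| :=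
      abs_le.mpr ⟨by linarith [neg_abs_le ξ₁, abs_nonneg ξ₂, hu'mem.1],
        by linarith [le_abs_self ξ₂, abs_nonneg ξ₁, hu'mem.2]⟩
    rw [habs, heq]
    have t1 : |(s - s') * ξ₁ + (r - r') * ξ₂ - ((s + r) - (s' + r')) * u'|
        ≤ |(s - s') * ξ₁| + |(r - r') * ξ₂| + |((s + r) - (s' + r')) * u'| := by
      have h1 := abs_add_le ((s - s') * ξ₁) ((r - r') * ξ₂)
      have h2 := abs_add_le ((s - s') * ξ₁ + (r - r') * ξ₂)
        (-(((s + r) - (s' + r')) * u'))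
      rw [abs_neg] at h2
      rw [sub_eq_add_neg]
      linarith
    have t2 : |(s - s') * ξ₁| + |(r - r') * ξ₂| + |((s + r) - (s' + r')) * u'|
        ≤ |s - s'| * |ξ₁| + |r - r'| * |ξ₂| + |(s + r) - (s' + r')| * (|ξ₁| + |ξ₂|) := by
      rw [abs_mul, abs_mul, abs_mul]
      gcongr
    linarith
  -- distances
  have hD : dist ((s, r) : ℝ × ℝ) (s', r') = max (|s - s'|) (|r - r'|) := by
    rw [Prod.dist_eq, Real.dist_eq, Real.dist_eq]
  set D : ℝ := dist ((s, r) : ℝ × ℝ) (s', r') with hDdef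
  have hD1 : |s - s'| ≤ D := le_trans (le_max_left _ _) hD.ge
  have hD2 : |r - r'| ≤ D := le_trans (le_max_right _ _) hD.ge
  have hDt : |(s + r) - (s' + r')| ≤ 2 * D := by
    have : |(s + r) - (s' + r')| ≤ |s - s'| + |r - r'| := by
      have := abs_add_le (s - s') (r - r'); rw [show (s + r) - (s' + r') = (s - s') + (r - r') by ring]; exact this
    linarith
  have hKcoe : ((2*(‖x₃‖ + M) + 3*(L:ℝ)*(|ξ₁|+|ξ₂|)).toNNReal : ℝ) =
      2*(‖x₃‖ + M) + 3*(L:ℝ)*(|ξ₁|+|ξ₂|) := by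
    rw [Real.coe_toNNReal]
    positivity
  rw [hKcoe]
  have hD0 : 0 ≤ D := dist_nonneg
  have hLmul : (L:ℝ) * ((s + r) * |u - u'|) ≤
      (L:ℝ) * (|s - s'| * |ξ₁| + |r - r'| * |ξ₂| + |(s + r) - (s' + r')| * (|ξ₁| + |ξ₂|)) :=
    mul_le_mul_of_nonneg_left hkey hL0
  have hx0 : 0 ≤ ‖x₃‖ + M := by positivity
  have hA : |(s + r) - (s' + r')| * (‖x₃‖ + M) ≤ 2 * D * (‖x₃‖ + M) :=
    mul_le_mul_of_nonneg_right hDt hx0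
  have h1 : |s - s'| * |ξ₁| ≤ D * |ξ₁| :=
    mul_le_mul_of_nonneg_right hD1 (abs_nonneg _)
  have h2 : |r - r'| * |ξ₂| ≤ D * |ξ₂| :=
    mul_le_mul_of_nonneg_right hD2 (abs_nonneg _)
  have h3 : |(s + r) - (s' + r')| * (|ξ₁| + |ξ₂|) ≤ 2 * D * (|ξ₁| + |ξ₂|) :=
    mul_le_mul_of_nonneg_right hDt (by positivity)
  have hkey' : (s + r) * |u - u'| ≤ 3 * D * (|ξ₁| + |ξ₂|) := by
    have : D * |ξ₁| + D * |ξ₂| + 2 * D * (|ξ₁| + |ξ₂|) = 3 * D * (|ξ₁| + |ξ₂|) := by ring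
    linarith
  have hL' : (L:ℝ) * ((s + r) * |u - u'|) ≤ (L:ℝ) * (3 * D * (|ξ₁| + |ξ₂|)) :=
    mul_le_mul_of_nonneg_left hkey' hL0
  have heq' : (s + r) * ((L:ℝ) * |u - u'|) = (L:ℝ) * ((s + r) * |u - u'|) := by ring
  have hexp : (2*(‖x₃‖ + M) + 3*(L:ℝ)*(|ξ₁|+|ξ₂|)) * D
      = 2 * D * (‖x₃‖ + M) + (L:ℝ) * (3 * D * (|ξ₁| + |ξ₂|)) := by ring
  rw [hexp]
  linarith [hnorm]
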